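/- (Proposition 3.9, necessary and sufficient condition for Hamiltonization, Euclidean case Q̄ = ℝ^n.) Suppose the smooth vector field X on ℝ^n × ℝ^n satisfies the reduced Chaplygin equations i_X(Ω − Ξ) = dH, where Ξ is a fiber-linear semibasic two-form, and let f: ℝ^n → ℝ be smooth and nowhere-vanishing. Then the Chaplygin-rescaled vector field X_C satisfies Hamilton's equations Ω(X_C(z), v) = DH_C(z)[v] for all z and v if and only if the one-form i_{X_C}(df ∧ Θ − f Ξ) vanishes identically, i.e. (df ∧ Θ)_z(X_C(z), v) − f(q)·Ξ_z(X_C(z), v) = 0 for all z = (q,p) and all v. -/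

import Mathlib

noncomputable section

open Matrix

/-- Configuration vectors: points of `ℝⁿ`. -/
abbrev Vec (n : ℕ) : Type := Fin n → ℝ

/-- Phase space `ℝⁿ × ℝⁿ`, points `z = (q, p)`. -/
abbrev Phase (n : ℕ) : Type := Vec n × Vec n

/-- Canonical symplectic form `Ω(u,v) = ⟨u_q, v_p⟩ − ⟨u_p, v_q⟩`. -/
def Omega {n : ℕ} (u v : Phase n) : ℝ := u.1 ⬝ᵥ v.2 - u.2 ⬝ᵥ v.1

/-- Liouville one-form `Θ_z(v) = ⟨p, v_q⟩` at `z = (q,p)`. -/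
def Theta {n : ℕ} (z v : Phase n) : ℝ := z.2 ⬝ᵥ v.1

/-- Fiber scaling `Ψ_f(q,p) = (q, f(q)·p)`. -/
def Psi {n : ℕ} (f : Vec n → ℝ) (z : Phase n) : Phase n := (z.1, f z.1 • z.2)

/-- `Ψ_{1/f}`, the inverse of `Ψ_f`. -/
def PsiInv {n : ℕ} (f : Vec n → ℝ) : Phase n → Phase n := Psi fun q => (f q)⁻¹

/-- The Chaplygin-rescaled vector field
`X_C(z) := DΨ_f(Ψ_{1/f}(z))[(1/f(q))·X(Ψ_{1/f}(z))]`. -/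
def ChapRescale {n : ℕ} (f : Vec n → ℝ) (X : Phase n → Phase n) (z : Phase n) : Phase n :=
  fderiv ℝ (Psi f) (PsiInv f z) ((f z.1)⁻¹ • X (PsiInv f z))

/-- The two-form `df ∧ Θ`. -/
def dfTheta {n : ℕ} (f : Vec n → ℝ) (z u v : Phase n) : ℝ :=
  fderiv ℝ f z.1 u.1 * (z.2 ⬝ᵥ v.1) - fderiv ℝ f z.1 v.1 * (z.2 ⬝ᵥ u.1)

/-- Divergence of a vector field: `div Y (z) = trace DY(z)`. -/
def divergence {n : ℕ} (Y : Phase n → Phase n) (z : Phase n) : ℝ :=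
  LinearMap.trace ℝ (Phase n) (fderiv ℝ Y z).toLinearMap

/-- A fiber-linear semibasic two-form on phase space: a smooth assignment
`z ↦ Ξ_z` of alternating bilinear forms whose value depends only on the base
components of its arguments, and which is linear in the fiber variable `p`. -/
structure FiberLinearSemibasicTwoForm (n : ℕ) where
  form : Phase n → Phase n → Phase n → ℝ
  smooth : ∀ u v : Phase n, ContDiff ℝ (⊤ : ℕ∞) fun z => form z u v
  alt : ∀ z u v : Phase n, form z u v = - form z v u
  add_left : ∀ (z u u' v : Phase n), form z (u + u') v = form z u v + form z u' v
  smul_left : ∀ (z : Phase n) (c : ℝ) (u v : Phase n), form z (c • u) v = c * form z u v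
  semibasic : ∀ (z u v u' v' : Phase n), u.1 = u'.1 → v.1 = v'.1 → form z u v = form z u' v'
  fiber_add : ∀ (q p p' : Vec n) (u v : Phase n),
    form (q, p + p') u v = form (q, p) u v + form (q, p') u v
  fiber_smul : ∀ (q : Vec n) (c : ℝ) (p : Vec n) (u v : Phase n),
    form (q, c • p) u v = c * form (q, p) u v

section Aux

variable {n : ℕ}

lemma hasFDerivAt_Psi (g : Vec n → ℝ) (z : Phase n) (hg : DifferentiableAt ℝ g z.1) :
    HasFDerivAt (Psi g)
      ((ContinuousLinearMap.fst ℝ (Vec n) (Vec n)).prod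
        (g z.1 • ContinuousLinearMap.snd ℝ (Vec n) (Vec n) +
          ((fderiv ℝ g z.1).comp (ContinuousLinearMap.fst ℝ (Vec n) (Vec n))).smulRight z.2)) z := by
  have h1 : HasFDerivAt (fun w : Phase n => g w.1)
      ((fderiv ℝ g z.1).comp (ContinuousLinearMap.fst ℝ (Vec n) (Vec n))) z :=
    hg.hasFDerivAt.comp z hasFDerivAt_fst
  have h2 := h1.smul (hasFDerivAt_snd (𝕜 := ℝ) (p := z))
  exact HasFDerivAt.prodMk hasFDerivAt_fst h2

lemma chap_formula (f : Vec n → ℝ) (X : Phase n → Phase n)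
    (hf : ContDiff ℝ (⊤ : ℕ∞) f) (hf0 : ∀ q, f q ≠ 0) (z : Phase n) :
    ChapRescale f X z =
      ((f z.1)⁻¹ • (X (PsiInv f z)).1,
        (X (PsiInv f z)).2 +
          ((f z.1)⁻¹ * ((f z.1)⁻¹ * fderiv ℝ f z.1 (X (PsiInv f z)).1)) • z.2) := by
  have hw1 : (PsiInv f z).1 = z.1 := rfl
  have hder := hasFDerivAt_Psi f (PsiInv f z) ((hf.differentiable (by simp)).differentiableAt)
  rw [ChapRescale, hder.fderiv]
  have hc := hf0 z.1
  refine Prod.ext ?_ ?_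
  · simp
  · show f (PsiInv f z).1 • ((f z.1)⁻¹ • X (PsiInv f z)).2 +
        (fderiv ℝ f (PsiInv f z).1 ((f z.1)⁻¹ • X (PsiInv f z)).1) • (PsiInv f z).2 = _
    have h2 : (PsiInv f z).2 = (f z.1)⁻¹ • z.2 := rfl
    rw [hw1, h2]
    have : f z.1 • ((f z.1)⁻¹ • X (PsiInv f z)).2 = (X (PsiInv f z)).2 := by
      show f z.1 • ((f z.1)⁻¹ • (X (PsiInv f z)).2) = _
      rw [smul_smul, mul_inv_cancel₀ hc, one_smul]
    rw [this]
    congr 1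
    show (fderiv ℝ f z.1 ((f z.1)⁻¹ • (X (PsiInv f z)).1)) • ((f z.1)⁻¹ • z.2) = _
    rw [(fderiv ℝ f z.1).map_smul, smul_smul]
    congr 1
    simp [smul_eq_mul]
    ring

lemma fderiv_inv_comp (f : Vec n → ℝ) (hf : ContDiff ℝ (⊤ : ℕ∞) f) (hf0 : ∀ q, f q ≠ 0)
    (q : Vec n) (v : Vec n) :
    fderiv ℝ (fun q => (f q)⁻¹) q v = -((f q)⁻¹ * fderiv ℝ f q v * (f q)⁻¹) := by
  have h : HasFDerivAt (fun q => (f q)⁻¹)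
      ((-ContinuousLinearMap.mulLeftRight ℝ ℝ (f q)⁻¹ (f q)⁻¹).comp (fderiv ℝ f q)) q :=
    (hasFDerivAt_inv' (hf0 q)).comp q ((hf.differentiable (by simp) q).hasFDerivAt)
  rw [h.fderiv]
  simp [mul_comm]

lemma fderiv_HC (f : Vec n → ℝ) (H : Phase n → ℝ)
    (hf : ContDiff ℝ (⊤ : ℕ∞) f) (hf0 : ∀ q, f q ≠ 0) (hH : ContDiff ℝ (⊤ : ℕ∞) H)
    (z v : Phase n) :
    fderiv ℝ (fun w => H (PsiInv f w)) z v
      = fderiv ℝ H (PsiInv f z)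
          (v.1, (f z.1)⁻¹ • v.2 + (-((f z.1)⁻¹ * fderiv ℝ f z.1 v.1 * (f z.1)⁻¹)) • z.2) := by
  have hg : DifferentiableAt ℝ (fun q => (f q)⁻¹) z.1 :=
    ((hf.differentiable (by simp)).differentiableAt).inv (hf0 z.1)
  have h1 := hasFDerivAt_Psi (fun q => (f q)⁻¹) z hg
  have h2 := ((hH.differentiable (by simp) (PsiInv f z)).hasFDerivAt).comp z h1
  have h2' : HasFDerivAt (fun w => H (PsiInv f w))
      ((fderiv ℝ H (PsiInv f z)).comp
        ((ContinuousLinearMap.fst ℝ (Vec n) (Vec n)).prod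
          ((fun q => (f q)⁻¹) z.1 • ContinuousLinearMap.snd ℝ (Vec n) (Vec n) +
            ((fderiv ℝ (fun q => (f q)⁻¹) z.1).comp
              (ContinuousLinearMap.fst ℝ (Vec n) (Vec n))).smulRight z.2))) z := h2
  rw [h2'.fderiv]
  simp only [ContinuousLinearMap.coe_comp', Function.comp_apply,
    ContinuousLinearMap.prod_apply, ContinuousLinearMap.add_apply,
    ContinuousLinearMap.coe_smul', Pi.smul_apply, ContinuousLinearMap.coe_fst',
    ContinuousLinearMap.coe_snd', ContinuousLinearMap.smulRight_apply]
  rw [fderiv_inv_comp f hf hf0]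

end Aux

theorem statement3 (n : ℕ) (hn : 1 ≤ n) (X : Phase n → Phase n) (H : Phase n → ℝ)
    (Ξ : FiberLinearSemibasicTwoForm n) (f : Vec n → ℝ)
    (hX : ContDiff ℝ (⊤ : ℕ∞) X) (hH : ContDiff ℝ (⊤ : ℕ∞) H)
    (hf : ContDiff ℝ (⊤ : ℕ∞) f) (hf0 : ∀ q, f q ≠ 0)
    (heq : ∀ (z v : Phase n), Omega (X z) v - Ξ.form z (X z) v = fderiv ℝ H z v) :
    (∀ (z v : Phase n),
        Omega (ChapRescale f X z) v = fderiv ℝ (fun w => H (PsiInv f w)) z v)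
      ↔ (∀ (z v : Phase n),
          dfTheta f z (ChapRescale f X z) v - f z.1 * Ξ.form z (ChapRescale f X z) v = 0) := by
  have key : ∀ (z v : Phase n),
      Omega (ChapRescale f X z) v - fderiv ℝ (fun w => H (PsiInv f w)) z v
        = -(f z.1)⁻¹ * (dfTheta f z (ChapRescale f X z) v
            - f z.1 * Ξ.form z (ChapRescale f X z) v) := by
    intro z v
    obtain ⟨q, p⟩ := z
    have hc : f q ≠ 0 := hf0 q
    have hw2 : PsiInv f (q, p) = (q, (f q)⁻¹ • p) := rfl
    have hchap := chap_formula f X hf hf0 (q, p)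
    have hB := fderiv_HC f H hf hf0 hH (q, p) v
    rw [hB, hw2] at *
    set Xw := X (q, (f q)⁻¹ • p) with hXw
    set c := f q with hcdef
    set a := fderiv ℝ f q with ha
    set u : Phase n := (v.1, c⁻¹ • v.2 + (-(c⁻¹ * a v.1 * c⁻¹)) • p) with hu
    have hHw := (heq (q, c⁻¹ • p) u).symm
    have hXi1 : Ξ.form (q, c⁻¹ • p) Xw u = c⁻¹ * Ξ.form (q, p) Xw v := by
      rw [Ξ.semibasic (q, c⁻¹ • p) Xw u Xw v rfl rfl, Ξ.fiber_smul]
    have hXi2 : Ξ.form (q, p) (ChapRescale f X (q, p)) v = c⁻¹ * Ξ.form (q, p) Xw v := by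
      rw [hchap]
      exact (Ξ.semibasic (q, p) (c⁻¹ • Xw.1, Xw.2 + (c⁻¹ * (c⁻¹ * a Xw.1)) • (q, p).2) v
        (c⁻¹ • Xw) v rfl rfl).trans (Ξ.smul_left (q, p) c⁻¹ Xw v)
    have hHw' : fderiv ℝ H (q, c⁻¹ • p) u = Omega Xw u - c⁻¹ * Ξ.form (q, p) Xw v := by
      rw [hHw, ← hXw, hXi1]
    rw [hHw', hXi2, hchap, hu]
    simp only [Omega, dfTheta]
    simp [add_dotProduct, dotProduct_add, smul_dotProduct, dotProduct_smul,
      smul_eq_mul, neg_smul, _root_.map_smul, dotProduct_comm p]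
    field_simp
    ring
  constructor
  · intro h z v
    have := key z v
    rw [h z v, sub_self] at this
    have h2 := this.symm
    rcases mul_eq_zero.mp h2 with h3 | h3
    · exact absurd (neg_eq_zero.mp h3) (inv_ne_zero (hf0 z.1))
    · exact h3
  · intro h z v
    have := key z v
    rw [h z v, mul_zero, sub_eq_zero] at this
    exact this
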